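/- Let θ₁,…,θₙ be complex numbers of modulus 1, let Λ = {l ∈ ℤⁿ : ∑ lₖθₖ = 0}, E = {x ∈ ℝⁿ : l·x ∈ ℤ for all l ∈ Λ}, and δ the ℓ^∞-distance from (1/2)𝟙 to E. Then for 0 < ε < 1/2, there exists X ∈ ℂ with {Re(X·θₖ)} ∈ (ε, 1−ε) for all k if and only if ε < 1/2 − δ. -/

import Mathlib

open Module Submodule

lemma half_ne_int : ∀ m : ℤ, ((1:ℝ)/2) ≠ (m : ℝ) := by
  intro m h
  have h2 : (1:ℝ) = ((2*m : ℤ) : ℝ) := by push_cast; linarith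
  have : (1:ℤ) = 2*m := by exact_mod_cast h2
  omega

theorem closed_subgroup_sep {F : Type*} [NormedAddCommGroup F] [NormedSpace ℝ F]
    [FiniteDimensional ℝ F] (G : AddSubgroup F) (hGc : IsClosed (G : Set F))
    {x : F} (hx : x ∉ G) :
    ∃ f : F →ₗ[ℝ] ℝ, (∀ g ∈ G, ∃ m : ℤ, f g = m) ∧ ∀ m : ℤ, f x ≠ m := by
  classical
  set W : Submodule ℝ F :=
    { carrier := {y | ∀ t : ℝ, t • y ∈ G}
      add_mem' := fun {a b} ha hb t => by simpa [smul_add] using G.add_mem (ha t) (hb t)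
      zero_mem' := fun t => by simpa using G.zero_mem
      smul_mem' := fun c {y} hy t => by simpa [smul_smul] using hy (t * c) } with hWdef
  have hWG : ∀ w ∈ W, w ∈ G := fun w hw => by simpa using hw 1
  obtain ⟨W', hc⟩ := Submodule.exists_isCompl W
  -- discreteness of G ∩ W'
  have hdisc : ∃ r > (0:ℝ), ∀ y, y ∈ G → y ∈ W' → y ≠ 0 → r ≤ ‖y‖ := by
    by_contra h
    push_neg at h
    choose y hyG hyW' hy0 hyn using fun j : ℕ => h (1 / (j + 1)) (by positivity)
    have hyn0 : ∀ j : ℕ, ‖y j‖ ≠ 0 := fun j => norm_ne_zero_iff.mpr (hy0 j)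
    set z : ℕ → F := fun j => ‖y j‖⁻¹ • y j with hz
    have hzs : ∀ j, z j ∈ Metric.sphere (0:F) 1 := by
      intro j
      simp only [mem_sphere_iff_norm, sub_zero, hz, norm_smul, norm_inv, norm_norm]
      exact inv_mul_cancel₀ (hyn0 j)
    obtain ⟨zl, hzls, φ, hφ, hzt⟩ :=
      (isCompact_sphere (0:F) 1).tendsto_subseq hzs
    have hylim : Filter.Tendsto (fun j => ‖y (φ j)‖) Filter.atTop (nhds 0) := by
      have h1 : Filter.Tendsto (fun j : ℕ => 1 / ((φ j : ℝ) + 1)) Filter.atTop (nhds 0) := by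
        apply Filter.Tendsto.comp tendsto_one_div_add_atTop_nhds_zero_nat
          (hφ.tendsto_atTop)
      refine squeeze_zero (fun j => norm_nonneg _) (fun j => le_of_lt (hyn (φ j))) h1
    have hzlW' : zl ∈ W' := by
      have : IsClosed (W' : Set F) := Submodule.closed_of_finiteDimensional W'
      exact this.mem_of_tendsto hzt
        (Filter.Eventually.of_forall fun j => W'.smul_mem _ (hyW' (φ j)))
    have hzlW : zl ∈ W := by
      intro t
      set m : ℕ → ℤ := fun j => ⌊t / ‖y (φ j)‖⌋ with hm
      set cseq : ℕ → ℝ := fun j => (m j : ℝ) * ‖y (φ j)‖ with hcseq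
      have hcb : ∀ j, |cseq j - t| ≤ ‖y (φ j)‖ := by
        intro j
        have hpos : (0:ℝ) < ‖y (φ j)‖ := (norm_nonneg _).lt_of_ne' (hyn0 (φ j))
        have h1 : (m j : ℝ) ≤ t / ‖y (φ j)‖ := Int.floor_le _
        have h2 : t / ‖y (φ j)‖ < m j + 1 := Int.lt_floor_add_one _
        have hA : (m j:ℝ) * ‖y (φ j)‖ ≤ t := (le_div_iff₀ hpos).mp h1
        have hB : t < ((m j:ℝ) + 1) * ‖y (φ j)‖ := (div_lt_iff₀ hpos).mp h2
        rw [abs_le]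
        constructor <;> (simp only [hcseq]; nlinarith)
      have hct : Filter.Tendsto cseq Filter.atTop (nhds t) := by
        have : Filter.Tendsto (fun j => cseq j - t) Filter.atTop (nhds 0) :=
          squeeze_zero_norm (fun j => by simpa using hcb j) hylim
        simpa using this.add_const t
      have hmem : ∀ j, cseq j • z (φ j) ∈ G := by
        intro j
        have : cseq j • z (φ j) = m j • y (φ j) := by
          rw [hcseq, hz]
          rw [smul_smul, mul_assoc, mul_inv_cancel₀ (hyn0 (φ j)), mul_one,
            Int.cast_smul_eq_zsmul]
        rw [this]
        exact AddSubgroup.zsmul_mem G (hyG (φ j)) (m j)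
      have hlim : Filter.Tendsto (fun j => cseq j • z (φ j)) Filter.atTop (nhds (t • zl)) :=
        hct.smul hzt
      exact hGc.mem_of_tendsto hlim (Filter.Eventually.of_forall hmem)
    have : zl = 0 := by
      have := hc.disjoint
      rw [Submodule.disjoint_def] at this
      exact this zl hzlW hzlW'
    rw [this] at hzls
    simp at hzls
  obtain ⟨r, hr0, hr⟩ := hdisc
  set Λ : Submodule ℤ F := AddSubgroup.toIntSubmodule (G ⊓ W'.toAddSubgroup) with hLdef
  have hΛmem : ∀ v : F, v ∈ Λ ↔ v ∈ G ∧ v ∈ W' := fun v => Iff.rfl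
  set S : Submodule ℝ F := span ℝ (Λ : Set F) with hSdef
  have hΛS : (Λ : Set F) ⊆ (S : Set F) := subset_span
  have hSW' : S ≤ W' := span_le.mpr (fun v hv => ((hΛmem v).1 hv).2)
  set Λ' : Submodule ℤ ↥S := Λ.comap ((S.subtype).restrictScalars ℤ) with hL'def
  have hΛ'mem : ∀ v : ↥S, v ∈ Λ' ↔ (v : F) ∈ Λ := fun v => Iff.rfl
  haveI hdiscΛ' : DiscreteTopology ↥Λ' := by
    rw [discreteTopology_iff_isOpen_singleton_zero]
    have hset : {(0 : ↥Λ')} = (fun yy : ↥Λ' => ((yy : ↥S) : F)) ⁻¹' (Metric.ball (0:F) r) := by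
      ext yy
      simp only [Set.mem_singleton_iff, Set.mem_preimage, Metric.mem_ball, dist_zero_right]
      constructor
      · rintro rfl; simpa using hr0
      · intro hlt
        by_contra h0
        have hne : ((yy : ↥S) : F) ≠ 0 := by
          intro hh
          exact h0 (ZeroMemClass.coe_eq_zero.mp (ZeroMemClass.coe_eq_zero.mp hh))
        have hmem := (hΛmem _).mp ((hΛ'mem _).mp yy.2)
        exact absurd hlt (not_lt.mpr (hr _ hmem.1 hmem.2 hne))
    rw [hset]
    exact (Metric.isOpen_ball).preimage (continuous_subtype_val.comp continuous_subtype_val)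
  have himg : S.subtype '' (Λ' : Set ↥S) = (Λ : Set F) := by
    ext v
    constructor
    · rintro ⟨w, hw, rfl⟩; exact hw
    · intro hv; exact ⟨⟨v, hΛS hv⟩, hv, rfl⟩
  haveI : IsZLattice ℝ Λ' := by
    refine ⟨?_⟩
    apply Submodule.map_injective_of_injective S.injective_subtype
    rw [Submodule.map_span, Submodule.map_top, Submodule.range_subtype]
    erw [himg]
  haveI : Module.Finite ℤ ↥Λ' := ZLattice.module_finite ℝ Λ'
  haveI : Module.Free ℤ ↥Λ' := ZLattice.module_free ℝ Λ'
  set b := Module.Free.chooseBasis ℤ ↥Λ' with hbdef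
  set c := b.ofZLatticeBasis ℝ Λ' with hcdef
  set π := Submodule.projectionOnto W' W hc.symm with hπdef
  have hsubW : ∀ v : F, v - π v ∈ W := by
    intro v
    have h0 : π (v - (π v : F)) = 0 := by
      rw [map_sub, Submodule.linearProjOfIsCompl_apply_left hc.symm (π v), sub_self]
    exact (Submodule.linearProjOfIsCompl_apply_eq_zero_iff hc.symm).mp h0
  have hπG : ∀ g ∈ G, ((π g : F)) ∈ Λ := by
    intro g hg
    refine (hΛmem _).mpr ⟨?_, (π g).2⟩
    have h1 : g - (π g : F) ∈ G := hWG _ (hsubW g)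
    have h2 : (π g : F) = g - (g - (π g : F)) := (sub_sub_cancel g _).symm
    rw [h2]; exact G.sub_mem hg h1
  set u := π x with hudef
  by_cases hu : (u : F) ∈ S
  · -- u ∈ S : use lattice coordinates
    set s : ↥S := ⟨(u : F), hu⟩ with hsdef
    by_cases hint : ∀ i, ∃ m : ℤ, c.repr s i = (m : ℝ)
    · exfalso
      choose mi hmi using hint
      have hsΛ' : s ∈ Λ' := by
        have h1 : s = ∑ i, mi i • ((b i : ↥Λ') : ↥S) := by
          conv_lhs => rw [← c.sum_repr s]
          refine Finset.sum_congr rfl fun i _ => ?_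
          rw [hmi i, Int.cast_smul_eq_zsmul, hcdef, Basis.ofZLatticeBasis_apply]
        rw [h1]
        exact Submodule.sum_mem _ fun i _ => Submodule.smul_mem _ _ (b i).2
      have huΛ : (u : F) ∈ Λ := (hΛ'mem s).mp hsΛ'
      have huG : (u : F) ∈ G := ((hΛmem _).mp huΛ).1
      have : x ∈ G := by
        have h1 : x - (u : F) ∈ G := hWG _ (hsubW x)
        have h2 : x = (x - (u : F)) + (u : F) := (sub_add_cancel x _).symm
        rw [h2]; exact G.add_mem h1 huG
      exact hx this
    · push_neg at hint
      obtain ⟨i, hi⟩ := hint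
      obtain ⟨U, hU⟩ := Submodule.exists_isCompl (S ⊔ W)
      set T := W ⊔ U with hTdef
      have hST : IsCompl S T := by
        constructor
        · rw [disjoint_def]
          intro v hvS hvT
          rw [hTdef, Submodule.mem_sup] at hvT
          obtain ⟨w, hw, u', hu', rfl⟩ := hvT
          have hu'SW : u' ∈ S ⊔ W := by
            have : u' = (w + u') - w := by abel
            rw [this]
            exact Submodule.sub_mem _ (Submodule.mem_sup_left hvS) (Submodule.mem_sup_right hw)
          have hu'0 : u' = 0 := by
            have hd := hU.disjoint
            rw [disjoint_def] at hd
            exact hd u' hu'SW hu'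
          rw [hu'0, add_zero] at hvS ⊢
          have hd := hc.disjoint
          rw [disjoint_def] at hd
          exact hd w hw (hSW' hvS)
        · rw [codisjoint_iff, hTdef, ← sup_assoc]
          exact codisjoint_iff.mp hU.codisjoint
      set πS := Submodule.projectionOnto S T hST with hπSdef
      have hπS_W : ∀ w ∈ W, πS w = 0 := fun w hw =>
        Submodule.projectionOnto_apply_of_mem_right hST (Submodule.mem_sup_left hw)
      refine ⟨(c.coord i).comp πS, ?_, ?_⟩
      · intro g hg
        have hgS : (π g : F) ∈ S := hΛS (hπG g hg)
        have hπSg : πS g = ⟨(π g : F), hgS⟩ := by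
          have e1 : g = (g - (π g : F)) + (π g : F) := (sub_add_cancel g _).symm
          conv_lhs => rw [e1]
          rw [map_add, hπS_W _ (hsubW g), zero_add]
          exact Submodule.linearProjOfIsCompl_apply_left hST ⟨(π g : F), hgS⟩
        set yΛ : ↥Λ' := ⟨⟨(π g : F), hgS⟩, (hΛ'mem _).mpr (hπG g hg)⟩ with hyΛ
        refine ⟨b.repr yΛ i, ?_⟩
        rw [LinearMap.comp_apply, hπSg, Basis.coord_apply]
        have := Basis.ofZLatticeBasis_repr_apply ℝ Λ' b yΛ i
        rw [hcdef]
        exact this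
      · intro m hm
        have hπSx : πS x = s := by
          have e1 : x = (x - (u : F)) + (u : F) := (sub_add_cancel x _).symm
          conv_lhs => rw [e1]
          rw [map_add, hπS_W _ (hsubW x), zero_add]
          exact Submodule.linearProjOfIsCompl_apply_left hST s
        rw [LinearMap.comp_apply, hπSx, Basis.coord_apply] at hm
        exact hi m hm
  · -- u ∉ S : x is not in S ⊔ W, use a dual functional killing S ⊔ W
    have hxp : x ∉ S ⊔ W := by
      intro hxp
      rw [Submodule.mem_sup] at hxp
      obtain ⟨sv, hsv, w, hw, hswx⟩ := hxp
      apply hu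
      have hπx : π x = ⟨sv, hSW' hsv⟩ := by
        rw [← hswx, map_add,
          Submodule.projectionOnto_apply_of_mem_right hc.symm hw, add_zero]
        exact Submodule.linearProjOfIsCompl_apply_left hc.symm ⟨sv, hSW' hsv⟩
      rw [hudef, hπx]
      exact hsv
    obtain ⟨f0, hf0x, hf0p⟩ := (S ⊔ W).exists_dual_map_eq_bot_of_notMem hxp inferInstance
    have hf0G : ∀ g ∈ G, f0 g = 0 := by
      intro g hg
      have hgp : g ∈ S ⊔ W := by
        have e1 : g = (g - (π g : F)) + (π g : F) := (sub_add_cancel g _).symm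
        rw [e1]
        exact Submodule.add_mem _ (Submodule.mem_sup_right (hsubW g))
          (Submodule.mem_sup_left (hΛS (hπG g hg)))
      have hmem : f0 g ∈ (S ⊔ W).map f0 := Submodule.mem_map_of_mem hgp
      rw [hf0p] at hmem
      simpa using hmem
    refine ⟨(1 / (2 * f0 x)) • f0, fun g hg => ⟨0, by simp [hf0G g hg]⟩, ?_⟩
    intro m hm
    have hfx : (1 / (2 * f0 x)) * f0 x = 1/2 := by
      field_simp
    rw [LinearMap.smul_apply, smul_eq_mul, hfx] at hm
    exact half_ne_int m hm

theorem stmt_17 (n : ℕ) (θ : Fin n → ℂ) (hθ : ∀ k, ‖θ k‖ = 1)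
    (E : Set (Fin n → ℝ))
    (hE : E = {x | ∀ l : Fin n → ℤ,
      (∑ k : Fin n, (l k : ℂ) * θ k) = 0 → ∃ z : ℤ, ∑ k, (l k : ℝ) * x k = z})
    (δ : ℝ) (hδ : δ = Metric.infDist (fun _ => (1/2 : ℝ)) E)
    (ε : ℝ) (hε0 : 0 < ε) (hε1 : ε < 1/2) :
    (∃ X : ℂ, ∀ k : Fin n,
      Int.fract (X * θ k).re ∈ Set.Ioo ε (1 - ε)) ↔ ε < 1/2 - δ := by
  classical
  set r : ℝ := 1/2 - ε with hrdef
  have hr0 : 0 < r := by simp [hrdef]; linarith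
  set p : Fin n → ℝ := fun _ => (1/2 : ℝ) with hpdef
  -- the linear map X ↦ (Re (X θ k))_k
  set φ : ℂ →ₗ[ℝ] (Fin n → ℝ) :=
    { toFun := fun X => fun k => (X * θ k).re
      map_add' := by intro X Y; funext k; simp [add_mul]
      map_smul' := by
        intro c X; funext k
        simp [Complex.real_smul, mul_assoc, Complex.re_ofReal_mul] } with hφdef
  have hφ_apply : ∀ X k, φ X k = (X * θ k).re := fun X k => rfl
  -- ℤ^n
  set ZnHom : (Fin n → ℤ) →+ (Fin n → ℝ) :=
    { toFun := fun m => fun k => (m k : ℝ)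
      map_zero' := by funext k; simp
      map_add' := by intro a b; funext k; simp } with hZnHomdef
  set A : AddSubgroup (Fin n → ℝ) := (LinearMap.range φ).toAddSubgroup ⊔ ZnHom.range
    with hAdef
  set G : AddSubgroup (Fin n → ℝ) := A.topologicalClosure with hGdef
  have hGclosed : IsClosed (G : Set (Fin n → ℝ)) := AddSubgroup.isClosed_topologicalClosure A
  have hGcoe : (G : Set (Fin n → ℝ)) = closure (A : Set (Fin n → ℝ)) := rfl
  -- basic membership facts about E
  have hE0 : (0 : Fin n → ℝ) ∈ E := by rw [hE]; intro l _; exact ⟨0, by simp⟩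
  have hVE : ∀ X : ℂ, φ X ∈ E := by
    intro X
    rw [hE]
    intro l hl
    refine ⟨0, ?_⟩
    have h1 : ∑ k, (l k : ℝ) * (φ X) k = (X * ∑ k, (l k : ℂ) * θ k).re := by
      rw [Finset.mul_sum, Complex.re_sum]
      refine Finset.sum_congr rfl fun k _ => ?_
      rw [hφ_apply,
        show X * ((l k : ℂ) * θ k) = ((l k : ℝ) : ℂ) * (X * θ k) by push_cast; ring,
        Complex.re_ofReal_mul]
    rw [h1, hl, mul_zero]
    simp
  have hZnE : ∀ mz : Fin n → ℤ, ZnHom mz ∈ E := by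
    intro mz
    rw [hE]
    intro l hl
    exact ⟨∑ k, l k * mz k, by push_cast; rfl⟩
  have hEadd : ∀ x ∈ E, ∀ mz : Fin n → ℤ, x + ZnHom mz ∈ E := by
    intro x hx mz
    rw [hE] at hx ⊢
    intro l hl
    obtain ⟨z, hz⟩ := hx l hl
    refine ⟨z + ∑ k, l k * mz k, ?_⟩
    have : ∑ k, (l k:ℝ) * (x + ZnHom mz) k = (∑ k, (l k:ℝ) * x k) + ∑ k, (l k:ℝ) * (mz k:ℝ) := by
      rw [← Finset.sum_add_distrib]
      exact Finset.sum_congr rfl fun k _ => by simp [hZnHomdef]; ring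
    rw [this, hz]
    push_cast
    ring
  have hEclosed : IsClosed E := by
    rw [hE]
    have hrepr : {x : Fin n → ℝ | ∀ l : Fin n → ℤ,
        (∑ k, (l k:ℂ) * θ k) = 0 → ∃ z : ℤ, ∑ k, (l k:ℝ) * x k = z}
        = ⋂ l ∈ {l : Fin n → ℤ | (∑ k, (l k:ℂ) * θ k) = 0},
            {x : Fin n → ℝ | ∃ z : ℤ, ∑ k, (l k:ℝ) * x k = z} := by
      ext x
      simp only [Set.mem_setOf_eq, Set.mem_iInter]
    rw [hrepr]
    refine isClosed_biInter fun l hl => ?_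
    have h2 : {x : Fin n → ℝ | ∃ z : ℤ, ∑ k, (l k:ℝ) * x k = z}
        = (fun x : Fin n → ℝ => ∑ k, (l k:ℝ) * x k) ⁻¹' (Set.range (fun z : ℤ => (z:ℝ))) := by
      ext x
      simp [eq_comm]
    rw [h2]
    refine IsClosed.preimage ?_ Int.isClosedEmbedding_coe_real.isClosed_range
    exact continuous_finset_sum _ fun k _ => continuous_const.mul (continuous_apply k)
  have hAE : (A : Set (Fin n → ℝ)) ⊆ E := by
    intro a ha
    obtain ⟨v, hv, w, hw, rfl⟩ := AddSubgroup.mem_sup.mp ha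
    obtain ⟨X, rfl⟩ := (Submodule.mem_toAddSubgroup _).mp hv
    obtain ⟨mz, rfl⟩ := hw
    exact hEadd _ (hVE X) mz
  have hGE : (G : Set (Fin n → ℝ)) ⊆ E := by
    rw [hGcoe]
    exact closure_minimal hAE hEclosed
  have hAG : A ≤ G := AddSubgroup.le_topologicalClosure A
  have hφG : ∀ X : ℂ, φ X ∈ G := fun X =>
    hAG (AddSubgroup.mem_sup_left ((Submodule.mem_toAddSubgroup _).mpr ⟨X, rfl⟩))
  -- E ⊆ G via the separation theorem
  have hEG : E ⊆ (G : Set (Fin n → ℝ)) := by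
    intro x hxE
    by_contra hxG
    obtain ⟨f, hfG, hfx⟩ := closed_subgroup_sep G hGclosed hxG
    have hbasis : ∀ k : Fin n, (fun j => if k = j then (1:ℝ) else 0) ∈ G := by
      intro k
      refine hAG (AddSubgroup.mem_sup_right ⟨fun j => if k = j then 1 else 0, ?_⟩)
      funext j
      simp [hZnHomdef, apply_ite (fun z : ℤ => (z:ℝ))]
    choose L hL using fun k => hfG _ (hbasis k)
    have hf_eq : ∀ v : Fin n → ℝ, f v = ∑ k, v k * (L k : ℝ) := by
      intro v
      rw [LinearMap.pi_apply_eq_sum_univ f v]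
      exact Finset.sum_congr rfl fun k _ => by rw [hL k, smul_eq_mul]
    have hφ0 : ∀ X : ℂ, f (φ X) = 0 := by
      intro X
      by_contra h0
      obtain ⟨m, hm⟩ := hfG _ (hφG ((1 / (2 * f (φ X))) • X))
      rw [map_smul, map_smul, smul_eq_mul] at hm
      have : (1:ℝ)/2 = (m:ℝ) := by
        rw [← hm]
        field_simp
      exact half_ne_int m this
    have hsum : ∀ X : ℂ, ∑ k, (L k:ℝ) * (X * θ k).re = 0 := by
      intro X
      have := hφ0 X
      rw [hf_eq] at this
      rw [← this]
      exact Finset.sum_congr rfl fun k _ => by rw [hφ_apply]; ring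
    have hzero : ∑ k, (L k : ℂ) * θ k = 0 := by
      apply Complex.ext
      · rw [Complex.re_sum, Complex.zero_re]
        have h1 := hsum 1
        simp only [one_mul] at h1
        rw [← h1]
        refine Finset.sum_congr rfl fun k _ => ?_
        rw [show ((L k:ℤ):ℂ) * θ k = (((L k:ℤ):ℝ):ℂ) * θ k by push_cast; ring,
          Complex.re_ofReal_mul]
      · rw [Complex.im_sum, Complex.zero_im]
        have h1 := hsum (-Complex.I)
        rw [← h1]
        refine Finset.sum_congr rfl fun k _ => ?_
        rw [show ((L k:ℤ):ℂ) * θ k = (((L k:ℤ):ℝ):ℂ) * θ k by push_cast; ring,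
          Complex.im_ofReal_mul, neg_mul, Complex.neg_re, Complex.I_mul_re, neg_neg]
    rw [hE] at hxE
    obtain ⟨zz, hzz⟩ := hxE L hzero
    apply hfx zz
    rw [hf_eq, ← hzz]
    exact Finset.sum_congr rfl fun k _ => by ring
  -- pointwise fractional-part criterion
  have hfr : ∀ y : ℝ, Int.fract y ∈ Set.Ioo ε (1-ε) ↔ ∃ m : ℤ, |y - ((m:ℝ) + 1/2)| < r := by
    intro y
    have hfd : Int.fract y = y - ⌊y⌋ := rfl
    constructor
    · intro h
      rw [Set.mem_Ioo, hfd] at h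
      refine ⟨⌊y⌋, ?_⟩
      rw [abs_lt, hrdef]
      constructor <;> linarith [h.1, h.2]
    · rintro ⟨m, hm⟩
      rw [abs_lt, hrdef] at hm
      have hfl : ⌊y⌋ = m := by
        rw [Int.floor_eq_iff]
        constructor <;> linarith [hm.1, hm.2]
      rw [Set.mem_Ioo, hfd, hfl]
      constructor <;> linarith [hm.1, hm.2]
  set U : Set (Fin n → ℝ) := {y | ∀ k, ∃ m : ℤ, |y k - ((m:ℝ) + 1/2)| < r} with hUdef
  have hUopen : IsOpen U := by
    have hU2 : U = ⋂ k, (fun y : Fin n → ℝ => y k) ⁻¹'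
        (⋃ m : ℤ, Metric.ball ((m:ℝ) + 1/2) r) := by
      ext y
      simp [hUdef, Real.dist_eq]
    rw [hU2]
    exact isOpen_iInter_of_finite fun k =>
      (isOpen_iUnion fun m => Metric.isOpen_ball).preimage (continuous_apply k)
  constructor
  · rintro ⟨X, hX⟩
    choose m hm using fun k => (hfr ((X * θ k).re)).mp (hX k)
    have hx'E : φ X + ZnHom (-m) ∈ E := hEadd _ (hVE X) (-m)
    have hdist : dist p (φ X + ZnHom (-m)) < r := by
      rw [dist_pi_lt_iff hr0]
      intro k
      rw [Real.dist_eq]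
      have h2 : p k - (φ X + ZnHom (-m)) k = -((X * θ k).re - ((m k:ℝ) + 1/2)) := by
        show (1:ℝ)/2 - ((X * θ k).re + ((-(m k) : ℤ):ℝ)) = _
        push_cast
        ring
      rw [h2, abs_neg]
      exact hm k
    have hlt : Metric.infDist p E < r :=
      lt_of_le_of_lt (Metric.infDist_le_dist_of_mem hx'E) hdist
    rw [hδ]
    rw [hrdef] at hlt
    linarith
  · intro hlt
    have hδlt : Metric.infDist p E < r := by
      rw [hδ] at hlt
      rw [hrdef]
      linarith
    obtain ⟨y, hyE, hyd⟩ := (Metric.infDist_lt_iff ⟨0, hE0⟩).mp hδlt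
    have hyG : y ∈ closure (A : Set (Fin n → ℝ)) := by rw [← hGcoe]; exact hEG hyE
    have hyU : y ∈ U := by
      intro k
      refine ⟨0, ?_⟩
      have h1 := (dist_pi_lt_iff hr0).mp hyd k
      rw [Real.dist_eq] at h1
      simp only [Int.cast_zero, zero_add]
      rw [abs_sub_comm]
      exact h1
    obtain ⟨a, haU, haA⟩ := (_root_.mem_closure_iff.mp hyG) U hUopen hyU
    obtain ⟨v, hv, w, hw, rfl⟩ := AddSubgroup.mem_sup.mp haA
    obtain ⟨X, rfl⟩ := (Submodule.mem_toAddSubgroup _).mp hv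
    obtain ⟨mz, rfl⟩ := hw
    refine ⟨X, fun k => ?_⟩
    obtain ⟨m, hm⟩ := haU k
    refine (hfr _).mpr ⟨m - mz k, ?_⟩
    have h3 : (X * θ k).re - (((m - mz k : ℤ):ℝ) + 1/2)
        = (φ X + ZnHom mz) k - ((m:ℝ) + 1/2) := by
      show _ = ((X * θ k).re + ((mz k:ℤ):ℝ)) - ((m:ℝ) + 1/2)
      push_cast
      ring
    rw [h3]
    exact hm
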